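/- Let L ≥ 1 be an integer, and let real numbers SNR_i ≥ 0 and C_i ≥ 0 for i = 1,…,L, and INR_i for i = 1,…,L−1 with 0 ≤ INR_i ≤ SNR_i, be given; set INR_L = 0. Define U = min over all subsets S ⊆ {1,…,L} of [ Σ_{i ∉ S} (1/2)·log₂(1 + SNR_i + INR_i) + Σ_{i ∈ S} C_i ], and R' = Σ_{i=1}^{L−1} (1/2)·log₂[(1 + 2^{−2C_i}·INR_i + SNR_i)/(1 + 2^{−2C_i}·INR_i + 2^{−2C_i}·SNR_i)] + min{ (1/2)·log₂(1 + SNR_L), C_L }. Then U − R' ≤ (1 + log₂3)·L/2 − 1/2. (This is the constant-gap result for per-base-station SIC without Wyner-Ziv coding for the Wyner model, Theorem 4 of the paper.) -/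

import Mathlib

section Helpers

private lemma gap_frac' (a b t : ℝ) (ha : 0 ≤ a) (hb : 0 ≤ b) (hba : b ≤ a)
    (ht0 : 0 < t) : min (1 / t) (1 + a + b) ≤ 6 * ((1 + t * b + a) / (1 + t * b + t * a)) := by
  have hd : 0 < 1 + t * b + t * a := by positivity
  have h1 : t * b ≤ t * a := mul_le_mul_of_nonneg_left hba ht0.le
  rcases le_or_gt (t * a) 1 with h | h
  · refine (min_le_right _ _).trans ?_
    rw [← mul_div_assoc, le_div_iff₀ hd]
    nlinarith [mul_le_mul_of_nonneg_left (h1.trans h) ha,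
      mul_le_mul_of_nonneg_left (h1.trans h) hb,
      mul_le_mul_of_nonneg_left h ha, mul_le_mul_of_nonneg_left h hb,
      mul_nonneg ht0.le hb]
  · refine (min_le_left _ _).trans ?_
    rw [← mul_div_assoc, div_le_div_iff₀ ht0 hd]
    nlinarith [mul_nonneg ht0.le hb, mul_nonneg (mul_nonneg ht0.le ht0.le) hb,
      mul_nonneg ht0.le ha]

private lemma gap_log' (a b c : ℝ) (ha : 0 ≤ a) (hb : 0 ≤ b) (hba : b ≤ a) (hc : 0 ≤ c) :
    min ((1 / 2) * Real.logb 2 (1 + a + b)) c ≤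
      (1 / 2) * Real.logb 2
        ((1 + (2 : ℝ) ^ (-(2 * c)) * b + a) / (1 + (2 : ℝ) ^ (-(2 * c)) * b + (2 : ℝ) ^ (-(2 * c)) * a))
      + (1 + Real.logb 2 3) / 2 := by
  set t : ℝ := (2 : ℝ) ^ (-(2 * c)) with htdef
  have ht0 : 0 < t := Real.rpow_pos_of_pos (by norm_num) _
  have hY : (0:ℝ) < 1 + a + b := by linarith
  have hX : (1:ℝ)/t = (2:ℝ) ^ (2*c) := by
    rw [htdef, Real.rpow_neg (by norm_num), one_div, inv_inv]
  have hXpos : (0:ℝ) < 1/t := by positivity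
  have hc' : c = (1/2) * Real.logb 2 (1/t) := by
    rw [hX, Real.logb_rpow (by norm_num) (by norm_num)]; ring
  have hd : 0 < 1 + t * b + t * a := by positivity
  have hn : 0 < 1 + t * b + a := by positivity
  have hD : 0 < (1 + t * b + a) / (1 + t * b + t * a) := by positivity
  have hmin : min ((1/2) * Real.logb 2 (1 + a + b)) c
      = (1/2) * Real.logb 2 (min (1 + a + b) (1/t)) := by
    rcases le_total (1 + a + b) (1/t) with hle | hle
    · rw [min_eq_left hle, hc', min_eq_left]
      exact mul_le_mul_of_nonneg_left (Real.logb_le_logb_of_le (by norm_num) hY hle) (by norm_num)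
    · rw [min_eq_right hle, hc', min_eq_right]
      exact mul_le_mul_of_nonneg_left (Real.logb_le_logb_of_le (by norm_num) hXpos hle) (by norm_num)
  rw [hmin]
  have hkey : min (1 + a + b) (1/t) ≤ 6 * ((1 + t * b + a) / (1 + t * b + t * a)) := by
    rw [min_comm]; exact gap_frac' a b t ha hb hba ht0
  have hminpos : 0 < min (1 + a + b) (1/t) := lt_min hY hXpos
  have hlog : Real.logb 2 (min (1 + a + b) (1/t)) ≤
      Real.logb 2 (6 * ((1 + t * b + a) / (1 + t * b + t * a))) :=
    Real.logb_le_logb_of_le (by norm_num) hminpos hkey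
  have h6 : Real.logb 2 (6 * ((1 + t * b + a) / (1 + t * b + t * a)))
      = Real.logb 2 6 + Real.logb 2 ((1 + t * b + a) / (1 + t * b + t * a)) :=
    Real.logb_mul (by norm_num) (ne_of_gt hD)
  have h6' : Real.logb 2 6 = 1 + Real.logb 2 3 := by
    rw [show (6:ℝ) = 2 * 3 by norm_num, Real.logb_mul (by norm_num) (by norm_num)]
    simp [Real.logb_self_eq_one]
  linarith [hlog]

end Helpers

/-- Theorem 4 of the paper: in the Wyner soft-handoff model under weak interference
(`INR i ≤ SNR i`), the sum rate of the per-base-station SIC scheme without Wyner-Ziv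
coding (decoding from user `L` down to user `1`, with base-station `L` using the better
of compress-and-forward and decode-and-forward) is within `(1 + log₂ 3)·L/2 - 1/2` bits
of the cut-set upper bound on the sum capacity. -/
theorem per_BS_SIC_no_WZ_constant_gap_Wyner (L : ℕ) (hL : 1 ≤ L)
    (SNR INR C : ℕ → ℝ)
    (hSNR : ∀ i ∈ Finset.Icc 1 L, 0 ≤ SNR i)
    (hC : ∀ i ∈ Finset.Icc 1 L, 0 ≤ C i)
    (hINR : ∀ i ∈ Finset.Ico 1 L, 0 ≤ INR i ∧ INR i ≤ SNR i)
    (hINRL : INR L = 0) :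
    let U := (Finset.Icc 1 L).powerset.inf' (Finset.powerset_nonempty _)
      (fun s => (∑ i ∈ Finset.Icc 1 L \ s, (1 / 2) * Real.logb 2 (1 + SNR i + INR i))
        + ∑ i ∈ s, C i)
    let R' := (∑ i ∈ Finset.Ico 1 L,
        (1 / 2) * Real.logb 2
          ((1 + (2 : ℝ) ^ (-(2 * C i)) * INR i + SNR i) /
            (1 + (2 : ℝ) ^ (-(2 * C i)) * INR i + (2 : ℝ) ^ (-(2 * C i)) * SNR i)))
      + min ((1 / 2) * Real.logb 2 (1 + SNR L)) (C L)
    U - R' ≤ (1 + Real.logb 2 3) * L / 2 - 1 / 2 := by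
  intro U R'
  set g : ℕ → ℝ := fun i => (1 / 2) * Real.logb 2 (1 + SNR i + INR i) with hg
  set S₀ : Finset ℕ := (Finset.Icc 1 L).filter (fun i => C i ≤ g i) with hS₀
  -- U is at most the value at S₀
  have hU : U ≤ (∑ i ∈ Finset.Icc 1 L \ S₀, g i) + ∑ i ∈ S₀, C i :=
    Finset.inf'_le _ (Finset.mem_powerset.2 (Finset.filter_subset _ _))
  -- that value equals the sum of mins
  have hval : (∑ i ∈ Finset.Icc 1 L \ S₀, g i) + ∑ i ∈ S₀, C i
      = ∑ i ∈ Finset.Icc 1 L, min (g i) (C i) := by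
    rw [hS₀, ← Finset.filter_not]
    rw [← Finset.sum_filter_add_sum_filter_not (Finset.Icc 1 L) (fun i => C i ≤ g i)
      (fun i => min (g i) (C i))]
    rw [add_comm]
    congr 1
    · exact Finset.sum_congr rfl fun i hi => (min_eq_right (Finset.mem_filter.1 hi).2).symm
    · exact Finset.sum_congr rfl fun i hi =>
        (min_eq_left (le_of_not_ge (Finset.mem_filter.1 hi).2)).symm
  -- split off the last index
  have hsplit : ∑ i ∈ Finset.Icc 1 L, min (g i) (C i)
      = (∑ i ∈ Finset.Ico 1 L, min (g i) (C i)) + min (g L) (C L) := by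
    rw [← Finset.Ico_add_one_right_eq_Icc, Finset.sum_Ico_succ_top (by omega)]
  have hgL : min (g L) (C L) = min ((1 / 2) * Real.logb 2 (1 + SNR L)) (C L) := by
    simp [hg, hINRL]
  -- per-index bound on Ico 1 L
  have hper : ∀ i ∈ Finset.Ico 1 L, min (g i) (C i) ≤
      (1 / 2) * Real.logb 2
        ((1 + (2 : ℝ) ^ (-(2 * C i)) * INR i + SNR i) /
          (1 + (2 : ℝ) ^ (-(2 * C i)) * INR i + (2 : ℝ) ^ (-(2 * C i)) * SNR i))
      + (1 + Real.logb 2 3) / 2 := by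
    intro i hi
    have hi' : i ∈ Finset.Icc 1 L := by
      simp only [Finset.mem_Ico] at hi; simp [Finset.mem_Icc]; omega
    exact gap_log' (SNR i) (INR i) (C i) (hSNR i hi') (hINR i hi).1 (hINR i hi).2 (hC i hi')
  have hsum : ∑ i ∈ Finset.Ico 1 L, min (g i) (C i) ≤
      (∑ i ∈ Finset.Ico 1 L,
        (1 / 2) * Real.logb 2
          ((1 + (2 : ℝ) ^ (-(2 * C i)) * INR i + SNR i) /
            (1 + (2 : ℝ) ^ (-(2 * C i)) * INR i + (2 : ℝ) ^ (-(2 * C i)) * SNR i)))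
      + (L - 1) * ((1 + Real.logb 2 3) / 2) := by
    have := Finset.sum_le_sum hper
    rw [Finset.sum_add_distrib, Finset.sum_const, Nat.card_Ico, nsmul_eq_mul] at this
    have hcard : ((L - 1 : ℕ) : ℝ) = (L : ℝ) - 1 := by
      have : (1:ℕ) ≤ L := hL
      push_cast [Nat.cast_sub this]
      ring
    rwa [hcard] at this
  have hlog3 : 0 ≤ Real.logb 2 3 := Real.logb_nonneg (by norm_num) (by norm_num)
  have hL' : (1:ℝ) ≤ (L:ℝ) := by exact_mod_cast hL
  have : U ≤ (∑ i ∈ Finset.Ico 1 L,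
        (1 / 2) * Real.logb 2
          ((1 + (2 : ℝ) ^ (-(2 * C i)) * INR i + SNR i) /
            (1 + (2 : ℝ) ^ (-(2 * C i)) * INR i + (2 : ℝ) ^ (-(2 * C i)) * SNR i)))
      + (L - 1) * ((1 + Real.logb 2 3) / 2) + min ((1 / 2) * Real.logb 2 (1 + SNR L)) (C L) := by
    calc U ≤ _ := hU
    _ = ∑ i ∈ Finset.Icc 1 L, min (g i) (C i) := hval
    _ = (∑ i ∈ Finset.Ico 1 L, min (g i) (C i)) + min (g L) (C L) := hsplit
    _ ≤ _ := by rw [hgL]; linarith [hsum]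
  have hR' : R' = (∑ i ∈ Finset.Ico 1 L,
        (1 / 2) * Real.logb 2
          ((1 + (2 : ℝ) ^ (-(2 * C i)) * INR i + SNR i) /
            (1 + (2 : ℝ) ^ (-(2 * C i)) * INR i + (2 : ℝ) ^ (-(2 * C i)) * SNR i)))
      + min ((1 / 2) * Real.logb 2 (1 + SNR L)) (C L) := rfl
  rw [hR'] at *
  nlinarith [this, hlog3, hL']
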